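/- Let h, k ≥ 1 be natural numbers. The one-relator presented group ⟨x, y | x^{1−hk}(y x^{h})^k⟩ (where x^{1−hk} is an integer power) is isomorphic to the torus knot group ⟨s, t | s^k t^{−(hk−1)}⟩ (i.e. the group with presentation ⟨s, t | s^k = t^{hk−1}⟩). -/

import Mathlib

namespace Stmt10

/-- Generators `x`, `y` of the free group `F₂`. -/
def x : FreeGroup (Fin 2) := FreeGroup.of 0
def y : FreeGroup (Fin 2) := FreeGroup.of 1

lemma mk_rel_one {rels : Set (FreeGroup (Fin 2))} {r : FreeGroup (Fin 2)} (hr : r ∈ rels) :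
    PresentedGroup.mk rels r = 1 :=
  (QuotientGroup.eq_one_iff _).mpr (Subgroup.subset_normalClosure hr)

/-- The one-relator group `⟨x, y | x^{1−hk}(y x^{h})^k⟩` (integer power) is isomorphic
to the torus knot group `⟨s, t | s^k t^{−(hk−1)}⟩`, i.e. `⟨s, t | s^k = t^{hk−1}⟩`. -/
theorem stmt10 (h k : ℕ) (hh : 1 ≤ h) (hk : 1 ≤ k) :
    Nonempty
      (PresentedGroup
          ({x ^ ((1 : ℤ) - h * k) * (y * x ^ h) ^ k} : Set (FreeGroup (Fin 2))) ≃*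
        PresentedGroup ({x ^ k * (y ^ (h * k - 1))⁻¹} : Set (FreeGroup (Fin 2)))) := by
  set relsA : Set (FreeGroup (Fin 2)) := {x ^ ((1 : ℤ) - h * k) * (y * x ^ h) ^ k}
  set relsB : Set (FreeGroup (Fin 2)) := {x ^ k * (y ^ (h * k - 1))⁻¹}
  have hhk : 1 ≤ h * k := Nat.one_le_iff_ne_zero.mpr (Nat.mul_ne_zero
    (Nat.one_le_iff_ne_zero.mp hh) (Nat.one_le_iff_ne_zero.mp hk))
  have hcast : ((h * k - 1 : ℕ) : ℤ) = (h : ℤ) * k - 1 := by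
    push_cast [hhk]; ring
  -- generators
  -- A-side relation
  have relA : (PresentedGroup.of 0 : PresentedGroup relsA) ^ ((1 : ℤ) - h * k) *
      ((PresentedGroup.of 1 : PresentedGroup relsA) *
        (PresentedGroup.of 0 : PresentedGroup relsA) ^ h) ^ k = 1 := by
    have := mk_rel_one (rels := relsA) (r := x ^ ((1 : ℤ) - h * k) * (y * x ^ h) ^ k) rfl
    simpa [x, y, PresentedGroup.of] using this
  have relB : (PresentedGroup.of 0 : PresentedGroup relsB) ^ k *
      ((PresentedGroup.of 1 : PresentedGroup relsB) ^ (h * k - 1))⁻¹ = 1 := by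
    have := mk_rel_one (rels := relsB) (r := x ^ k * (y ^ (h * k - 1))⁻¹) rfl
    simpa [x, y, PresentedGroup.of] using this
  -- maps
  set fAB : Fin 2 → PresentedGroup relsB :=
    ![PresentedGroup.of 1, PresentedGroup.of 0 * ((PresentedGroup.of 1 : PresentedGroup relsB) ^ h)⁻¹]
  set fBA : Fin 2 → PresentedGroup relsA :=
    ![PresentedGroup.of 1 * (PresentedGroup.of 0 : PresentedGroup relsA) ^ h, PresentedGroup.of 0]
  have hAB : ∀ r ∈ relsA, FreeGroup.lift fAB r = 1 := by
    rintro r rfl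
    have hB : (PresentedGroup.of 0 : PresentedGroup relsB) ^ k =
        (PresentedGroup.of 1 : PresentedGroup relsB) ^ (h * k - 1) :=
      mul_inv_eq_one.mp relB
    simp only [x, y, map_mul, map_zpow, map_pow, FreeGroup.lift_apply_of, fAB]
    simp only [Matrix.cons_val_zero, Matrix.cons_val_one, Matrix.head_cons]
    rw [inv_mul_cancel_right, hB, ← zpow_natCast ((PresentedGroup.of 1 : PresentedGroup relsB)) (h*k-1),
      hcast, ← zpow_add]
    norm_num
  have hBA : ∀ r ∈ relsB, FreeGroup.lift fBA r = 1 := by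
    rintro r rfl
    have hA : ((PresentedGroup.of 1 : PresentedGroup relsA) *
        (PresentedGroup.of 0 : PresentedGroup relsA) ^ h) ^ k =
        (PresentedGroup.of 0 : PresentedGroup relsA) ^ (h * k - 1) := by
      have h1 : ((PresentedGroup.of 1 : PresentedGroup relsA) *
          (PresentedGroup.of 0 : PresentedGroup relsA) ^ h) ^ k =
          ((PresentedGroup.of 0 : PresentedGroup relsA) ^ ((1 : ℤ) - h * k))⁻¹ :=
        eq_inv_of_mul_eq_one_right relA
      rw [h1, ← zpow_neg, ← zpow_natCast ((PresentedGroup.of 0 : PresentedGroup relsA)) (h*k-1), hcast]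
      ring_nf
    simp only [x, y, map_mul, map_inv, map_pow, FreeGroup.lift_apply_of, fBA]
    simp only [Matrix.cons_val_zero, Matrix.cons_val_one, Matrix.head_cons]
    rw [hA, mul_inv_cancel]
  let φ : PresentedGroup relsA →* PresentedGroup relsB := PresentedGroup.toGroup hAB
  let ψ : PresentedGroup relsB →* PresentedGroup relsA := PresentedGroup.toGroup hBA
  have hψφ : ψ.comp φ = MonoidHom.id _ := by
    apply PresentedGroup.ext
    intro i
    fin_cases i <;>
      simp [φ, ψ, PresentedGroup.toGroup.of, fAB, fBA]
  have hφψ : φ.comp ψ = MonoidHom.id _ := by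
    apply PresentedGroup.ext
    intro i
    fin_cases i <;>
      simp [φ, ψ, PresentedGroup.toGroup.of, fAB, fBA]
  exact ⟨MulEquiv.mk' ⟨φ, ψ, fun a => congrFun (congrArg DFunLike.coe hψφ) a,
    fun b => congrFun (congrArg DFunLike.coe hφψ) b⟩ (map_mul φ)⟩

end Stmt10
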